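/- Let I ⊆ ℝ be an interval, Φ : I → ℝ strictly convex and continuous, and x < y < z in I. Let ε > 0 satisfy x - ε ∈ I and y + ε ≤ z - ε. Then there exist unique δ, γ > 0 with δ + γ = ε and Φ(x - δ) + Φ(y + ε) + Φ(z - γ) = Φ(x) + Φ(y) + Φ(z). -/

import Mathlib

private lemma sc_pt {I : Set ℝ} {Φ : ℝ → ℝ} (hΦ : StrictConvexOn ℝ I Φ)
    {a b p q : ℝ} (ha : a ∈ I) (hb : b ∈ I) (hab : a ≠ b)
    (hp : 0 < p) (hq : 0 < q) (hpq : p + q = 1) :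
    Φ (p * a + q * b) < p * Φ a + q * Φ b := by
  simpa [smul_eq_mul] using hΦ.2 ha hb hab hp hq hpq

private lemma sc_exchange {I : Set ℝ} {Φ : ℝ → ℝ} (hΦ : StrictConvexOn ℝ I Φ)
    {a b c d : ℝ} (ha : a ∈ I) (hd : d ∈ I)
    (hab : a < b) (hbc : b ≤ c) (hcd : c < d) (hs : a + d = b + c) :
    Φ b + Φ c < Φ a + Φ d := by
  have had : a < d := hab.trans_le (hbc.trans hcd.le)
  have hda : (0:ℝ) < d - a := by linarith
  have hp : (0:ℝ) < (d - b) / (d - a) := div_pos (by linarith) hda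
  have hq : (0:ℝ) < (b - a) / (d - a) := div_pos (by linarith) hda
  have hpq : (d - b) / (d - a) + (b - a) / (d - a) = 1 := by
    field_simp; ring
  have h1 := sc_pt hΦ ha hd had.ne hp hq hpq
  have h2 := sc_pt hΦ ha hd had.ne hq hp (by linarith)
  have e1 : (d - b) / (d - a) * a + (b - a) / (d - a) * d = b := by
    field_simp; ring
  have e2 : (b - a) / (d - a) * a + (d - b) / (d - a) * d = c := by
    have hc : c = a + d - b := by linarith
    rw [hc]; field_simp; ring
  rw [e1] at h1
  rw [e2] at h2
  have hA : (d - b) / (d - a) * Φ a + (b - a) / (d - a) * Φ a = Φ a := by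
    rw [← add_mul, hpq, one_mul]
  have hD : (b - a) / (d - a) * Φ d + (d - b) / (d - a) * Φ d = Φ d := by
    rw [← add_mul]
    rw [show (b - a) / (d - a) + (d - b) / (d - a) = 1 by linarith, one_mul]
  linarith

/-- For `Φ` strictly convex and continuous on an interval `I`,
`x < y < z` in `I`, and `ε > 0` with `x - ε ∈ I` and `y + ε ≤ z - ε`, there exist
unique `δ, γ > 0` with `δ + γ = ε` and
`Φ (x - δ) + Φ (y + ε) + Φ (z - γ) = Φ x + Φ y + Φ z`. -/
theorem unique_delta_gamma (I : Set ℝ) (Φ : ℝ → ℝ)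
    (hΦ : StrictConvexOn ℝ I Φ) (hΦc : ContinuousOn Φ I)
    (x y z : ℝ) (hx : x ∈ I) (hy : y ∈ I) (hz : z ∈ I)
    (hxy : x < y) (hyz : y < z) (ε : ℝ) (hε : 0 < ε)
    (hxε : x - ε ∈ I) (hyzε : y + ε ≤ z - ε) :
    ∃! dg : ℝ × ℝ, 0 < dg.1 ∧ 0 < dg.2 ∧ dg.1 + dg.2 = ε ∧
      Φ (x - dg.1) + Φ (y + ε) + Φ (z - dg.2) = Φ x + Φ y + Φ z := by
  have hoc : Set.OrdConnected I := hΦ.1.ordConnected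
  have hyε : y + ε ∈ I := hoc.out hy hz ⟨by linarith, by linarith⟩
  have hzε : z - ε ∈ I := hoc.out hy hz ⟨by linarith, by linarith⟩
  set S : ℝ := Φ x + Φ y + Φ z with hS
  -- key inequality at δ = 0
  have hkey0 : Φ (y + ε) + Φ (z - ε) < Φ y + Φ z :=
    sc_exchange hΦ hy hz (by linarith) hyzε (by linarith) (by ring)
  -- key inequality at δ = ε
  have hkeyε : Φ x + Φ y < Φ (x - ε) + Φ (y + ε) :=
    sc_exchange hΦ hxε hyε (by linarith) hxy.le (by linarith) (by ring)
  -- the function F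
  set F : ℝ → ℝ := fun δ => Φ (x - δ) + Φ (y + ε) + Φ (z - (ε - δ)) with hF
  have hmem1 : ∀ δ ∈ Set.Icc (0:ℝ) ε, x - δ ∈ I := fun δ hδ =>
    hoc.out hxε hx ⟨by linarith [hδ.2], by linarith [hδ.1]⟩
  have hmem2 : ∀ δ ∈ Set.Icc (0:ℝ) ε, z - (ε - δ) ∈ I := fun δ hδ =>
    hoc.out hzε hz ⟨by linarith [hδ.1], by linarith [hδ.2]⟩
  have hFc : ContinuousOn F (Set.Icc 0 ε) := by
    apply ContinuousOn.add
    apply ContinuousOn.add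
    · exact hΦc.comp ((continuous_const.sub continuous_id).continuousOn) hmem1
    · exact continuousOn_const
    · exact hΦc.comp (by fun_prop) hmem2
  have hF0 : F 0 < S := by
    have : F 0 = Φ x + Φ (y + ε) + Φ (z - ε) := by simp [hF]
    rw [this, hS]; linarith
  have hFε : S < F ε := by
    have : F ε = Φ (x - ε) + Φ (y + ε) + Φ z := by simp [hF]
    rw [this, hS]; linarith
  obtain ⟨δ, hδmem, hδeq⟩ :=
    intermediate_value_Ioo hε.le hFc (Set.mem_Ioo.mpr ⟨hF0, hFε⟩)
  -- uniqueness core: no two distinct solutions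
  have huniq : ∀ p q : ℝ × ℝ,
      (0 < p.1 ∧ 0 < p.2 ∧ p.1 + p.2 = ε ∧
        Φ (x - p.1) + Φ (y + ε) + Φ (z - p.2) = S) →
      (0 < q.1 ∧ 0 < q.2 ∧ q.1 + q.2 = ε ∧
        Φ (x - q.1) + Φ (y + ε) + Φ (z - q.2) = S) →
      p.1 < q.1 → False := by
    rintro ⟨δ1, γ1⟩ ⟨δ2, γ2⟩ ⟨hδ1, hγ1, hsum1, heq1⟩ ⟨hδ2, hγ2, hsum2, heq2⟩ hlt
    dsimp only at *
    have hδ2pos : (0:ℝ) < δ2 := hδ1.trans hlt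
    have hp : (0:ℝ) < (δ2 - δ1) / δ2 := div_pos (by linarith) hδ2pos
    have hq : (0:ℝ) < δ1 / δ2 := div_pos hδ1 hδ2pos
    have hpq : (δ2 - δ1) / δ2 + δ1 / δ2 = 1 := by field_simp; ring
    have hxδ2 : x - δ2 ∈ I := hoc.out hxε hx ⟨by linarith, by linarith⟩
    have hzγ2 : z - γ2 ∈ I := hoc.out hzε hz ⟨by linarith, by linarith⟩
    have hne1 : x ≠ x - δ2 := by intro h; linarith [h.le, h.ge]
    have hne2 : z - ε ≠ z - γ2 := by intro h; linarith [h.le, h.ge, hsum2]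
    have h1 := sc_pt hΦ hx hxδ2 hne1 hp hq hpq
    have h2 := sc_pt hΦ hzε hzγ2 hne2 hp hq hpq
    have e1 : (δ2 - δ1) / δ2 * x + δ1 / δ2 * (x - δ2) = x - δ1 := by
      field_simp; ring
    have e2 : (δ2 - δ1) / δ2 * (z - ε) + δ1 / δ2 * (z - γ2) = z - γ1 := by
      have : γ2 = ε - δ2 := by linarith
      rw [this]
      have : γ1 = ε - δ1 := by linarith
      rw [this]
      field_simp; ring
    rw [e1] at h1
    rw [e2] at h2
    -- S - Φ(y+ε) = Φ(x-δ1)+Φ(z-γ1) < p*(Φx+Φ(z-ε)) + q*(S-Φ(y+ε))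
    -- with Φx + Φ(z-ε) < S - Φ(y+ε) (hkey0), p > 0, p + q = 1 : contradiction
    have hkey : Φ x + Φ (z - ε) < S - Φ (y + ε) := by rw [hS]; linarith
    have hA : (δ2 - δ1) / δ2 * Φ x + (δ2 - δ1) / δ2 * Φ (z - ε)
        = (δ2 - δ1) / δ2 * (Φ x + Φ (z - ε)) := (mul_add _ _ _).symm
    have hB : δ1 / δ2 * Φ (x - δ2) + δ1 / δ2 * Φ (z - γ2)
        = δ1 / δ2 * (S - Φ (y + ε)) := by
      rw [← mul_add]; congr 1; linarith
    have hBB : (δ2 - δ1) / δ2 * (S - Φ (y + ε)) + δ1 / δ2 * (S - Φ (y + ε))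
        = S - Φ (y + ε) := by rw [← add_mul, hpq, one_mul]
    have hmul := mul_lt_mul_of_pos_left hkey hp
    linarith
  refine ⟨(δ, ε - δ), ⟨hδmem.1, show (0:ℝ) < ε - δ by linarith [hδmem.2], show δ + (ε - δ) = ε by ring, by
    have : F δ = S := hδeq
    simpa [hF] using this⟩, ?_⟩
  rintro ⟨δ', γ'⟩ ⟨h1, h2, h3, h4⟩
  have hP1 : 0 < (δ, ε - δ).1 ∧ 0 < (δ, ε - δ).2 ∧ (δ, ε - δ).1 + (δ, ε - δ).2 = ε ∧
      Φ (x - (δ, ε - δ).1) + Φ (y + ε) + Φ (z - (δ, ε - δ).2) = S := by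
    refine ⟨hδmem.1, show (0:ℝ) < ε - δ by linarith [hδmem.2], show δ + (ε - δ) = ε by ring, ?_⟩
    have : F δ = S := hδeq
    simpa [hF] using this
  have hP2 : 0 < (δ', γ').1 ∧ 0 < (δ', γ').2 ∧ (δ', γ').1 + (δ', γ').2 = ε ∧
      Φ (x - (δ', γ').1) + Φ (y + ε) + Φ (z - (δ', γ').2) = S := ⟨h1, h2, h3, h4⟩
  have heq : δ' = δ := by
    rcases lt_trichotomy δ' δ with h | h | h
    · exact absurd (huniq _ _ hP2 hP1 h) (fun f => f.elim)
    · exact h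
    · exact absurd (huniq _ _ hP1 hP2 h) (fun f => f.elim)
  have : γ' = ε - δ := by rw [heq] at h3; linarith
  simp [heq, this]
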